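/- arXiv:1910.08957 — 3 statements merged into one kernel-verified Lean document; each statement's English description precedes it below -/
import Mathlib

section
/- For every real α > 0, every real β, and every real x ≥ 0, the series Σ_{n=0}^∞ (-1)^n · x^(αn+1) / ((αn+1) · Γ(αn+α+β)) is summable (so the generalised complementary exponential integral Ein_{α,β}(x) is well defined by this series). -/
open Real

/-- Key Gamma growth estimate from log-convexity: for `t > 1` and `a > 0`,
`Γ(t + a) ≥ (t - 1) ^ a * Γ t`. -/
lemma gamma_ratio_lower (a t : ℝ) (ha : 0 < a) (ht : 1 < t) :
    (t - 1) ^ a * Real.Gamma t ≤ Real.Gamma (t + a) := by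
  have ht1 : (0 : ℝ) < t - 1 := by linarith
  have ht0 : (0 : ℝ) < t := by linarith
  have hG1 : 0 < Real.Gamma (t - 1) := Real.Gamma_pos_of_pos ht1
  have hGt : 0 < Real.Gamma t := Real.Gamma_pos_of_pos ht0
  have hGta : 0 < Real.Gamma (t + a) := Real.Gamma_pos_of_pos (by linarith)
  have hslope := Real.convexOn_log_Gamma.slope_mono_adjacent
    (x := t - 1) (y := t) (z := t + a)
    (Set.mem_Ioi.2 ht1) (Set.mem_Ioi.2 (by linarith)) (by linarith) (by linarith)
  have hfe : Real.Gamma t = (t - 1) * Real.Gamma (t - 1) := by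
    have := Real.Gamma_add_one (s := t - 1) (ne_of_gt ht1)
    simpa using this
  have hdiff : (Real.log (Real.Gamma t) - Real.log (Real.Gamma (t - 1))) / (t - (t - 1))
      = Real.log (t - 1) := by
    rw [hfe, Real.log_mul (ne_of_gt ht1) (ne_of_gt hG1)]
    ring
  rw [Function.comp, Function.comp, Function.comp] at hslope
  rw [hdiff] at hslope
  have hkey : Real.log (t - 1) * a + Real.log (Real.Gamma t)
      ≤ Real.log (Real.Gamma (t + a)) := by
    have h2 : Real.log (t - 1) * a ≤ Real.log (Real.Gamma (t + a)) - Real.log (Real.Gamma t) := by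
      have := (le_div_iff₀ (by linarith : (0:ℝ) < t + a - t)).mp hslope
      linarith [this]
    linarith
  have hlog : Real.log ((t - 1) ^ a * Real.Gamma t) ≤ Real.log (Real.Gamma (t + a)) := by
    rw [Real.log_mul (by positivity) (ne_of_gt hGt), Real.log_rpow ht1, mul_comm]
    exact hkey
  calc (t - 1) ^ a * Real.Gamma t
        = Real.exp (Real.log ((t - 1) ^ a * Real.Gamma t)) := by
          rw [Real.exp_log (by positivity)]
      _ ≤ Real.exp (Real.log (Real.Gamma (t + a))) := Real.exp_le_exp.2 hlog
      _ = Real.Gamma (t + a) := Real.exp_log hGta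

/-- For every real `α > 0`, every real `β`, and every real `x ≥ 0`, the series
`Σ_{n=0}^∞ (-1)^n · x^(αn+1) / ((αn+1) · Γ(αn+α+β))` is summable, so the generalised
complementary exponential integral `Ein_{α,β}(x)` is well defined by this series. -/
theorem einSeries_summable (α : ℝ) (hα : 0 < α) (β : ℝ) (x : ℝ) (hx : 0 ≤ x) :
    Summable (fun n : ℕ =>
      (-1 : ℝ) ^ n * x ^ (α * n + 1) / ((α * n + 1) * Real.Gamma (α * n + α + β))) := by
  rcases eq_or_lt_of_le hx with rfl | hx0
  · have : ∀ n : ℕ, (-1 : ℝ) ^ n * (0:ℝ) ^ (α * n + 1)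
        / ((α * n + 1) * Real.Gamma (α * n + α + β)) = 0 := by
      intro n
      rw [Real.zero_rpow (by positivity)]
      ring
    simpa [this] using summable_zero
  · set y := x ^ α with hy
    have hy0 : 0 < y := Real.rpow_pos_of_pos hx0 α
    set M : ℝ := max 2 (1 + (2 * y) ^ (1 / α)) with hM
    have hten : Filter.Tendsto (fun n : ℕ => α * n + α + β) Filter.atTop Filter.atTop := by
      apply Filter.tendsto_atTop_add_const_right
      apply Filter.tendsto_atTop_add_const_right
      exact (tendsto_natCast_atTop_atTop (R := ℝ)).const_mul_atTop hα
    refine summable_of_ratio_norm_eventually_le (r := 1/2) (by norm_num) ?_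
    filter_upwards [hten.eventually_ge_atTop M] with n hn
    set t : ℝ := α * n + α + β with htd
    have ht2 : 2 ≤ t := le_trans (le_max_left _ _) hn
    have htc : 1 + (2 * y) ^ (1 / α) ≤ t := le_trans (le_max_right _ _) hn
    have hGt : 0 < Real.Gamma t := Real.Gamma_pos_of_pos (by linarith)
    have hGta : 0 < Real.Gamma (t + α) := Real.Gamma_pos_of_pos (by linarith)
    have hd0 : (0:ℝ) < α * n + 1 := by positivity
    have hd1 : (0:ℝ) < α * (n + 1) + 1 := by positivity
    -- (t-1)^α ≥ 2y
    have hpow : 2 * y ≤ (t - 1) ^ α := by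
      have h1 : (2 * y) ^ (1 / α) ≤ t - 1 := by linarith
      have h2 : ((2 * y) ^ (1 / α)) ^ α ≤ (t - 1) ^ α :=
        Real.rpow_le_rpow (by positivity) h1 hα.le
      rwa [← Real.rpow_mul (by positivity), one_div,
        inv_mul_cancel₀ (ne_of_gt hα), Real.rpow_one] at h2
    have hGrow : 2 * y * Real.Gamma t ≤ Real.Gamma (t + α) := by
      calc 2 * y * Real.Gamma t ≤ (t - 1) ^ α * Real.Gamma t := by
            apply mul_le_mul_of_nonneg_right hpow hGt.le
        _ ≤ Real.Gamma (t + α) := gamma_ratio_lower α t hα (by linarith)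
    -- identify the shifted point
    have hshift : α * (n + 1 : ℕ) + α + β = t + α := by push_cast; ring
    have hshift' : α * (n + 1 : ℕ) + 1 = α * (n:ℝ) + α + 1 := by push_cast; ring
    have hxpow : x ^ (α * (n + 1 : ℕ) + 1) = x ^ (α * n + 1) * y := by
      rw [hshift', hy, ← Real.rpow_add hx0]
      ring_nf
    have hxp : 0 < x ^ (α * (n:ℝ) + 1) := Real.rpow_pos_of_pos hx0 _
    simp only [Real.norm_eq_abs, abs_div, abs_mul, abs_pow, abs_neg, abs_one, one_pow, one_mul]
    rw [hshift, hxpow]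
    push_cast
    rw [abs_of_pos (mul_pos hxp hy0), abs_of_pos hxp, abs_of_pos hd1, abs_of_pos hGta,
      abs_of_pos hd0, abs_of_pos hGt]
    have hstep : α * (n:ℝ) + 1 ≤ α * ((n:ℝ) + 1) + 1 := by nlinarith [hα.le]
    calc x ^ (α * (n:ℝ) + 1) * y / ((α * ((n:ℝ) + 1) + 1) * Real.Gamma (t + α))
        ≤ x ^ (α * (n:ℝ) + 1) * y / ((α * (n:ℝ) + 1) * (2 * y * Real.Gamma t)) := by
          apply div_le_div_of_nonneg_left (by positivity) (by positivity)
          exact mul_le_mul hstep hGrow (by positivity) (by positivity)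
      _ = 1/2 * (x ^ (α * (n:ℝ) + 1) / ((α * (n:ℝ) + 1) * Real.Gamma t)) := by
          field_simp
end

section
/- Let α > 0, β, γ be real numbers with γ > 0. For every complex s with Re(s) > −γ/α one has the convergent expansion 1/((αs+γ) · Γ(αs+α+β)) = Σ_{j=0}^∞ (α+β−γ)_j / Γ(αs + 1 + α + β + j), where (a)_j = a(a+1)⋯(a+j−1) is the Pochhammer symbol. -/
open Complex

namespace InverseFactorialExpansionAux

open Filter MeasureTheory intervalIntegral Set

/-- `1/Γ(z) = z/Γ(z+1)` holds for ALL `z : ℂ` with Mathlib's conventions. -/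
lemma one_div_Gamma_eq_self_div (z : ℂ) :
    (1 : ℂ) / Complex.Gamma z = z / Complex.Gamma (z + 1) := by
  rcases eq_or_ne z 0 with rfl | hz
  · simp [Complex.Gamma_zero]
  · rw [Complex.Gamma_add_one z hz]
    rcases eq_or_ne (Complex.Gamma z) 0 with h | h
    · simp [h]
    · field_simp

/-- `(a)_j · Γ(a) = Γ(a+j)` for complex `a` which is a positive real. -/
lemma ascPochhammer_mul_Gamma (a : ℝ) (ha : 0 < a) (j : ℕ) :
    (ascPochhammer ℂ j).eval (a : ℂ) * Complex.Gamma (a : ℂ) =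
      Complex.Gamma ((a : ℂ) + j) := by
  induction j with
  | zero => simp
  | succ n ih =>
    have hne : (a : ℂ) + n ≠ 0 := by
      intro h
      have := congrArg Complex.re h
      push_cast at this
      have hn : (0:ℝ) ≤ (n:ℝ) := Nat.cast_nonneg n
      simp at this
      nlinarith
    have : Complex.Gamma ((a : ℂ) + (n + 1 : ℕ)) = ((a : ℂ) + n) * Complex.Gamma ((a : ℂ) + n) := by
      push_cast
      rw [show (a : ℂ) + (n + 1) = ((a : ℂ) + n) + 1 by ring, Complex.Gamma_add_one _ hne]
    rw [this, ← ih, ascPochhammer_succ_eval]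
    ring

lemma Gamma_arg_ne_zero {x : ℂ} (hx : 0 < x.re) {a : ℝ} (ha : 0 < a) (N : ℕ) :
    (0:ℝ) < (x + a + N).re := by
  simp only [Complex.add_re, Complex.ofReal_re, Complex.natCast_re]
  have : (0:ℝ) ≤ (N:ℝ) := Nat.cast_nonneg N
  linarith

lemma telescope (a : ℝ) (ha : 0 < a) (x : ℂ) (hx : 0 < x.re) (N : ℕ) :
    ∑ j ∈ Finset.range N,
        (ascPochhammer ℂ j).eval (a : ℂ) / Complex.Gamma (x + a + 1 + j)
      = 1 / (x * Complex.Gamma (x + a))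
        - (ascPochhammer ℂ N).eval (a : ℂ) / (x * Complex.Gamma (x + a + N)) := by
  have hx0 : x ≠ 0 := fun h => by simp [h] at hx
  induction N with
  | zero => simp
  | succ n ih =>
    rw [Finset.sum_range_succ, ih]
    have hren : (0:ℝ) < (x + a + n).re := Gamma_arg_ne_zero hx ha n
    have hw : x + (a:ℂ) + n ≠ 0 := fun h => by simp [h] at hren
    have hΓn : Complex.Gamma (x + a + n) ≠ 0 := Complex.Gamma_ne_zero_of_re_pos hren
    have hΓrec : Complex.Gamma (x + a + (n+1:ℕ)) = (x + a + n) * Complex.Gamma (x + a + n) := by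
      push_cast
      rw [show x + (a:ℂ) + ((n:ℂ) + 1) = (x + a + n) + 1 by ring, Complex.Gamma_add_one _ hw]
    have harg : x + (a:ℂ) + 1 + (n:ℕ) = x + a + (n+1:ℕ) := by push_cast; ring
    rw [harg, hΓrec, ascPochhammer_succ_eval]
    field_simp
    ring

lemma beta_bound (a : ℝ) (ha : 0 < a) (x : ℂ) (hx : 0 < x.re) (k : ℕ) :
    ‖Complex.betaIntegral ((a : ℂ) + (k + 1 : ℕ)) (x + 1)‖
      ≤ (1 / (a + k)) ^ (x.re + 1) * Real.Gamma (x.re + 1) := by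
  set m : ℝ := a + k with hm
  have hm0 : 0 < m := by positivity
  set c : ℝ := x.re with hc
  -- Step 2: norm of beta integral ≤ real integral
  have h2 : ‖Complex.betaIntegral ((a : ℂ) + (k + 1 : ℕ)) (x + 1)‖
      ≤ |∫ t in (0:ℝ)..1, t ^ m * (1 - t) ^ c| := by
    rw [Complex.betaIntegral]
    apply intervalIntegral.norm_integral_le_abs_of_norm_le
    · filter_upwards [MeasureTheory.ae_restrict_mem measurableSet_uIoc] with t ht
      rw [Set.uIoc_of_le (by norm_num : (0:ℝ) ≤ 1)] at ht
      have ht0 : 0 < t := ht.1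
      have ht1 : t ≤ 1 := ht.2
      rw [norm_mul]
      have e1 : ‖(t : ℂ) ^ ((a : ℂ) + (k + 1 : ℕ) - 1)‖ = t ^ m := by
        rw [Complex.norm_cpow_eq_rpow_re_of_pos ht0]
        congr 1
        simp [hm]
        push_cast
        ring
      have e2 : ‖(1 - (t : ℂ)) ^ (x + 1 - 1)‖ = (1 - t) ^ c := by
        have : (1 - (t : ℂ)) = ((1 - t : ℝ) : ℂ) := by push_cast; ring
        rw [this, show x + 1 - 1 = x by ring,
          Complex.norm_cpow_eq_rpow_re_of_nonneg (by linarith) (by positivity)]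
      rw [e1, e2]
    · apply Continuous.intervalIntegrable
      apply Continuous.mul
      · exact continuous_iff_continuousAt.mpr fun t =>
          Real.continuousAt_rpow_const t m (Or.inr hm0.le)
      · exact (continuous_iff_continuousAt.mpr fun t =>
          Real.continuousAt_rpow_const t c (Or.inr hx.le)).comp (by continuity)
  -- Step 3: symmetry
  have h3 : ∫ t in (0:ℝ)..1, t ^ m * (1 - t) ^ c
      = ∫ t in (0:ℝ)..1, t ^ c * (1 - t) ^ m := by
    have := intervalIntegral.integral_comp_sub_left
      (a := (0:ℝ)) (b := 1) (fun t => t ^ m * (1 - t) ^ c) 1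
    simp only [sub_zero, sub_self, sub_sub_cancel] at this
    rw [← this]
    congr 1
    ext t
    ring
  -- Step 4: bound (1-t)^m by exp(-(m*t))
  have h4 : ∫ t in (0:ℝ)..1, t ^ c * (1 - t) ^ m
      ≤ ∫ t in (0:ℝ)..1, t ^ c * Real.exp (-(m * t)) := by
    apply intervalIntegral.integral_mono_on (by norm_num)
    · apply Continuous.intervalIntegrable
      apply Continuous.mul
      · exact continuous_iff_continuousAt.mpr fun t =>
          Real.continuousAt_rpow_const t c (Or.inr hx.le)
      · exact (continuous_iff_continuousAt.mpr fun t =>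
          Real.continuousAt_rpow_const t m (Or.inr hm0.le)).comp (by continuity)
    · apply Continuous.intervalIntegrable
      apply Continuous.mul
      · exact continuous_iff_continuousAt.mpr fun t =>
          Real.continuousAt_rpow_const t c (Or.inr hx.le)
      · continuity
    · intro t ht
      rcases ht with ⟨ht0, ht1⟩
      apply mul_le_mul_of_nonneg_left _ (Real.rpow_nonneg ht0 c)
      have hle : 1 - t ≤ Real.exp (-t) := by
        nlinarith [Real.add_one_le_exp (-t)]
      calc (1 - t) ^ m ≤ (Real.exp (-t)) ^ m :=
            Real.rpow_le_rpow (by linarith) hle hm0.le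
        _ = Real.exp (-(m * t)) := by
            rw [← Real.exp_mul]; ring_nf
  -- Step 5: extend to Ioi 0
  have hInt : MeasureTheory.IntegrableOn (fun t : ℝ => t ^ c * Real.exp (-(m * t))) (Set.Ioi 0) := by
    have := integrableOn_rpow_mul_exp_neg_mul_rpow (p := 1) (s := c) (b := m)
      (by linarith) one_pos hm0
    simpa [Real.rpow_one] using this
  have h5 : ∫ t in (0:ℝ)..1, t ^ c * Real.exp (-(m * t))
      ≤ ∫ t in Set.Ioi (0:ℝ), t ^ c * Real.exp (-(m * t)) := by
    rw [intervalIntegral.integral_of_le (by norm_num : (0:ℝ) ≤ 1)]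
    apply MeasureTheory.setIntegral_mono_set hInt
    · filter_upwards [MeasureTheory.ae_restrict_mem measurableSet_Ioi] with t ht
      have : (0:ℝ) < t := ht
      positivity
    · exact Filter.Eventually.of_forall fun t ht => ht.1
  -- Step 6: evaluate
  have h6 : ∫ t in Set.Ioi (0:ℝ), t ^ c * Real.exp (-(m * t))
      = (1 / m) ^ (c + 1) * Real.Gamma (c + 1) := by
    have := Real.integral_rpow_mul_exp_neg_mul_Ioi (a := c + 1) (r := m)
      (by linarith) hm0
    simpa using this
  have habs : |∫ t in (0:ℝ)..1, t ^ m * (1 - t) ^ c|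
      = ∫ t in (0:ℝ)..1, t ^ m * (1 - t) ^ c := by
    apply _root_.abs_of_nonneg
    apply intervalIntegral.integral_nonneg (by norm_num)
    intro t ht
    have h1 : (0:ℝ) ≤ t := ht.1
    have h2 : (0:ℝ) ≤ 1 - t := by linarith [ht.2]
    exact mul_nonneg (Real.rpow_nonneg h1 m) (Real.rpow_nonneg h2 c)
  calc ‖Complex.betaIntegral ((a : ℂ) + (k + 1 : ℕ)) (x + 1)‖
      ≤ |∫ t in (0:ℝ)..1, t ^ m * (1 - t) ^ c| := h2
    _ = ∫ t in (0:ℝ)..1, t ^ m * (1 - t) ^ c := habs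
    _ = ∫ t in (0:ℝ)..1, t ^ c * (1 - t) ^ m := h3
    _ ≤ ∫ t in (0:ℝ)..1, t ^ c * Real.exp (-(m * t)) := h4
    _ ≤ ∫ t in Set.Ioi (0:ℝ), t ^ c * Real.exp (-(m * t)) := h5
    _ = (1 / m) ^ (c + 1) * Real.Gamma (c + 1) := h6

lemma core (a : ℝ) (ha : 0 < a) (x : ℂ) (hx : 0 < x.re) :
    Summable (fun j : ℕ =>
      (ascPochhammer ℂ j).eval (a : ℂ) / Complex.Gamma (x + a + 1 + j))
    ∧ ∑' j : ℕ, (ascPochhammer ℂ j).eval (a : ℂ) / Complex.Gamma (x + a + 1 + j)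
      = 1 / (x * Complex.Gamma (x + a)) := by
  set c : ℝ := x.re with hc
  set term : ℕ → ℂ := fun j =>
    (ascPochhammer ℂ j).eval (a : ℂ) / Complex.Gamma (x + a + 1 + j) with hterm
  have hx0 : x ≠ 0 := fun h => by rw [hc, h] at hx; simp at hx
  have hΓa : Complex.Gamma (a : ℂ) ≠ 0 :=
    Complex.Gamma_ne_zero_of_re_pos (by simp only [Complex.ofReal_re]; exact ha)
  have hΓx1 : Complex.Gamma (x + 1) ≠ 0 :=
    Complex.Gamma_ne_zero_of_re_pos (by simp; linarith)
  set K : ℝ := Real.Gamma (c + 1) / (‖Complex.Gamma (a : ℂ)‖ * ‖Complex.Gamma (x + 1)‖) with hK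
  have hnorms : 0 < ‖Complex.Gamma (a:ℂ)‖ * ‖Complex.Gamma (x + 1)‖ :=
    mul_pos (norm_pos_iff.mpr hΓa) (norm_pos_iff.mpr hΓx1)
  have hKpos : 0 < K :=
    div_pos (Real.Gamma_pos_of_pos (by linarith)) hnorms
  -- positivity facts
  have hak : ∀ k : ℕ, (0:ℝ) < a + k := fun k => by positivity
  have hre : ∀ N : ℕ, (0:ℝ) < (x + a + N).re := by
    intro N
    simp only [Complex.add_re, Complex.ofReal_re, Complex.natCast_re]
    have : (0:ℝ) ≤ (N:ℝ) := Nat.cast_nonneg N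
    linarith
  have hwne : ∀ N : ℕ, x + (a:ℂ) + N ≠ 0 := fun N h => by
    have := hre N; rw [h] at this; simp at this
  have hΓw : ∀ N : ℕ, Complex.Gamma (x + a + N) ≠ 0 :=
    fun N => Complex.Gamma_ne_zero_of_re_pos (hre N)
  have hΓarg : ∀ j : ℕ, Complex.Gamma (x + a + 1 + j) ≠ 0 := by
    intro j
    apply Complex.Gamma_ne_zero_of_re_pos
    simp only [Complex.add_re, Complex.ofReal_re, Complex.one_re, Complex.natCast_re]
    have : (0:ℝ) ≤ (j:ℝ) := Nat.cast_nonneg j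
    linarith
  -- term in beta form
  have term_eq : ∀ k : ℕ, term (k + 1)
      = Complex.betaIntegral ((a : ℂ) + (k + 1 : ℕ)) (x + 1)
          / (Complex.Gamma (a : ℂ) * Complex.Gamma (x + 1)) := by
    intro k
    have hu : 0 < ((a : ℂ) + (k + 1 : ℕ)).re := by
      simp only [Complex.add_re, Complex.ofReal_re, Complex.natCast_re]
      have : (0:ℝ) ≤ ((k+1:ℕ):ℝ) := Nat.cast_nonneg _
      linarith
    have hv : 0 < (x + 1).re := by simp; linarith
    have key := Complex.Gamma_mul_Gamma_eq_betaIntegral hu hv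
    have harg : (a : ℂ) + (k + 1 : ℕ) + (x + 1) = x + a + 1 + ((k+1 : ℕ) : ℂ) := by
      push_cast; ring
    rw [harg] at key
    rw [hterm]
    rw [div_eq_div_iff (hΓarg (k+1)) (mul_ne_zero hΓa hΓx1)]
    calc (ascPochhammer ℂ (k+1)).eval (a : ℂ)
          * (Complex.Gamma (a:ℂ) * Complex.Gamma (x + 1))
        = ((ascPochhammer ℂ (k+1)).eval (a : ℂ) * Complex.Gamma (a:ℂ))
            * Complex.Gamma (x + 1) := by ring
      _ = Complex.Gamma ((a : ℂ) + (k+1 : ℕ)) * Complex.Gamma (x + 1) := by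
          rw [ascPochhammer_mul_Gamma a ha]
      _ = Complex.Gamma (x + a + 1 + ((k+1 : ℕ):ℂ)) *
            Complex.betaIntegral ((a : ℂ) + (k + 1 : ℕ)) (x + 1) := key
      _ = Complex.betaIntegral ((a : ℂ) + (k + 1 : ℕ)) (x + 1)
            * Complex.Gamma (x + a + 1 + (k+1 : ℕ)) := by push_cast; ring
  -- norm bound on shifted terms
  have hterm_norm : ∀ k : ℕ, ‖term (k + 1)‖ ≤ (a + k) ^ (-(c + 1)) * K := by
    intro k
    rw [term_eq k, norm_div, norm_mul]
    have h1 : ‖Complex.betaIntegral ((a : ℂ) + (k + 1 : ℕ)) (x + 1)‖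
        ≤ (1 / (a + k)) ^ (c + 1) * Real.Gamma (c + 1) := beta_bound a ha x hx k
    have h2 : (1 / (a + k) : ℝ) ^ (c + 1) = (a + k) ^ (-(c + 1)) := by
      rw [Real.rpow_neg (hak k).le, one_div, Real.inv_rpow (hak k).le]
    rw [h2] at h1
    rw [div_le_iff₀ hnorms, hK]
    calc ‖Complex.betaIntegral ((a : ℂ) + (k + 1 : ℕ)) (x + 1)‖
        ≤ (a + k) ^ (-(c + 1)) * Real.Gamma (c + 1) := h1
      _ = (a + k) ^ (-(c+1)) * (Real.Gamma (c+1) / (‖Complex.Gamma (a:ℂ)‖ * ‖Complex.Gamma (x+1)‖))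
            * (‖Complex.Gamma (a:ℂ)‖ * ‖Complex.Gamma (x+1)‖) := by
          rw [mul_assoc, div_mul_cancel₀ _ hnorms.ne']
  -- summability
  have hsummable : Summable term := by
    apply Summable.of_norm
    rw [← summable_nat_add_iff 1]
    apply Summable.of_nonneg_of_le (fun k => norm_nonneg _) hterm_norm
    have hbase : Summable (fun k : ℕ => ((k:ℝ) ^ (-(c+1)) * K)) := by
      apply Summable.mul_right
      rw [Real.summable_nat_rpow]
      linarith
    rw [← summable_nat_add_iff 1] at hbase ⊢
    apply Summable.of_nonneg_of_le (fun k => by positivity) _ hbase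
    intro k
    apply mul_le_mul_of_nonneg_right _ hKpos.le
    apply Real.rpow_le_rpow_of_nonpos (by positivity)
    · push_cast; linarith
    · linarith
  refine ⟨hsummable, ?_⟩
  -- remainder identity
  have hD : ∀ N : ℕ,
      (ascPochhammer ℂ N).eval (a:ℂ) / (x * Complex.Gamma (x + a + N))
        = ((x + a + N) / x) * term N := by
    intro N
    have hΓrec : Complex.Gamma (x + a + 1 + N) = (x + a + N) * Complex.Gamma (x + a + N) := by
      rw [show x + (a:ℂ) + 1 + N = (x + a + N) + 1 by ring, Complex.Gamma_add_one _ (hwne N)]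
    show _ = _ * ((ascPochhammer ℂ N).eval (a:ℂ) / Complex.Gamma (x + a + 1 + N))
    rw [hΓrec, div_mul_div_comm,
      show x * ((x + (a:ℂ) + N) * Complex.Gamma (x + a + N))
        = (x + (a:ℂ) + N) * (x * Complex.Gamma (x + a + N)) by ring,
      mul_div_mul_left _ _ (hwne N)]
  -- remainder tends to zero
  have hy' : ∀ k : ℕ, ((a:ℝ)+k) ^ (-c) = (a+k) * (a+k) ^ (-(c+1)) := by
    intro k
    rw [show -c = 1 + -(c+1) by ring, Real.rpow_add (hak k), Real.rpow_one]
  have hnx : 0 < ‖x‖ := norm_pos_iff.mpr hx0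
  have hDto0 : Tendsto (fun N : ℕ =>
      (ascPochhammer ℂ N).eval (a:ℂ) / (x * Complex.Gamma (x + a + N))) atTop (nhds 0) := by
    rw [← Filter.tendsto_add_atTop_iff_nat 1]
    have hbound : ∀ k : ℕ,
        ‖(ascPochhammer ℂ (k+1)).eval (a:ℂ) / (x * Complex.Gamma (x + a + (k+1:ℕ)))‖
          ≤ (((‖x + (a:ℂ)‖ + 1) + (a+k)) / ‖x‖) * ((a+k) ^ (-(c+1)) * K) := by
      intro k
      rw [hD (k+1), norm_mul, norm_div]
      have hb1 : ‖x + (a:ℂ) + ((k+1:ℕ):ℂ)‖ ≤ (‖x + (a:ℂ)‖ + 1) + (a + k) := by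
        calc ‖x + (a:ℂ) + ((k+1:ℕ):ℂ)‖
            ≤ ‖x + (a:ℂ)‖ + ‖((k+1:ℕ):ℂ)‖ := norm_add_le _ _
          _ = ‖x + (a:ℂ)‖ + ((k+1:ℕ):ℝ) := by rw [Complex.norm_natCast]
          _ ≤ (‖x + (a:ℂ)‖ + 1) + (a + k) := by push_cast; linarith
      gcongr
      exact hterm_norm k
    refine squeeze_zero_norm hbound ?_
    · have hA : Tendsto (fun k : ℕ => a + (k:ℝ)) atTop atTop :=
        tendsto_atTop_add_const_left atTop a tendsto_natCast_atTop_atTop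
      have t1 : Tendsto (fun k : ℕ => (a+(k:ℝ)) ^ (-(c+1))) atTop (nhds 0) :=
        (tendsto_rpow_neg_atTop (by linarith)).comp hA
      have key : Tendsto (fun k : ℕ =>
          (((‖x + (a:ℂ)‖ + 1) + (a+k)) / ‖x‖) * ((a+k) ^ (-(c+1)) * K)) atTop (nhds 0) := by
        have expand : ∀ k : ℕ, (((‖x + (a:ℂ)‖ + 1) + (a+k)) / ‖x‖) * ((a+k) ^ (-(c+1)) * K)
            = ((‖x + (a:ℂ)‖ + 1) * ((a+k) ^ (-(c+1))) + (a+k) ^ (-c)) * (K / ‖x‖) := by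
          intro k
          rw [hy' k]
          field_simp
        simp only [expand]
        have t2 : Tendsto (fun k : ℕ => (a+(k:ℝ)) ^ (-c)) atTop (nhds 0) :=
          (tendsto_rpow_neg_atTop hx).comp hA
        have := ((t1.const_mul (‖x + (a:ℂ)‖ + 1)).add t2).mul_const (K / ‖x‖)
        simpa using this
      exact key
  -- conclude
  have h1 : Tendsto (fun N => ∑ j ∈ Finset.range N, term j) atTop
      (nhds (∑' j : ℕ, term j)) := hsummable.hasSum.tendsto_sum_nat
  have h2 : Tendsto (fun N => ∑ j ∈ Finset.range N, term j) atTop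
      (nhds (1 / (x * Complex.Gamma (x + a)) - 0)) := by
    apply Tendsto.congr _ (tendsto_const_nhds.sub hDto0)
    intro N
    exact (telescope a ha x hx N).symm
  have := tendsto_nhds_unique h1 h2
  rw [sub_zero] at this
  exact this

lemma descend (a : ℝ) (x : ℂ) (hx : 0 < x.re)
    (IH : Summable (fun j : ℕ =>
        (ascPochhammer ℂ j).eval (((a + 1 : ℝ)) : ℂ) / Complex.Gamma (x + (a + 1 : ℝ) + 1 + j))
      ∧ ∑' j : ℕ, (ascPochhammer ℂ j).eval (((a + 1 : ℝ)) : ℂ)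
            / Complex.Gamma (x + (a + 1 : ℝ) + 1 + j)
          = 1 / (x * Complex.Gamma (x + (a + 1 : ℝ)))) :
    Summable (fun j : ℕ =>
      (ascPochhammer ℂ j).eval (a : ℂ) / Complex.Gamma (x + a + 1 + j))
    ∧ ∑' j : ℕ, (ascPochhammer ℂ j).eval (a : ℂ) / Complex.Gamma (x + a + 1 + j)
      = 1 / (x * Complex.Gamma (x + a)) := by
  have hx0 : x ≠ 0 := fun h => by rw [h] at hx; simp at hx
  have hshift : ∀ j : ℕ,
      (ascPochhammer ℂ (j + 1)).eval (a : ℂ)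
        = (a : ℂ) * (ascPochhammer ℂ j).eval ((a : ℂ) + 1) := by
    intro j
    rw [ascPochhammer_succ_left]
    simp [Polynomial.eval_mul, Polynomial.eval_comp]
  have harg : ∀ j : ℕ, x + ((a : ℝ) : ℂ) + 1 + ((j + 1 : ℕ) : ℂ)
      = x + (((a + 1 : ℝ)) : ℂ) + 1 + (j : ℂ) := by
    intro j; push_cast; ring
  have hterm : ∀ j : ℕ,
      (ascPochhammer ℂ (j + 1)).eval (a : ℂ) / Complex.Gamma (x + a + 1 + (j + 1 : ℕ))
        = (a : ℂ) * ((ascPochhammer ℂ j).eval (((a + 1 : ℝ)) : ℂ)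
            / Complex.Gamma (x + (a + 1 : ℝ) + 1 + j)) := by
    intro j
    rw [hshift j, harg j, mul_div_assoc]
    norm_num
  have hsummable : Summable (fun j : ℕ =>
      (ascPochhammer ℂ j).eval (a : ℂ) / Complex.Gamma (x + a + 1 + j)) := by
    apply (summable_nat_add_iff 1).mp
    have := IH.1.mul_left (a : ℂ)
    apply this.congr
    intro j
    exact (hterm j).symm
  refine ⟨hsummable, ?_⟩
  rw [Summable.tsum_eq_zero_add hsummable]
  have h0 : (ascPochhammer ℂ 0).eval (a : ℂ) / Complex.Gamma (x + a + 1 + (0 : ℕ))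
      = 1 / Complex.Gamma (x + a + 1) := by
    simp
  have hsum1 : ∑' j : ℕ,
      (ascPochhammer ℂ (j + 1)).eval (a : ℂ) / Complex.Gamma (x + a + 1 + (j + 1 : ℕ))
      = (a : ℂ) * (1 / (x * Complex.Gamma (x + (a + 1 : ℝ)))) := by
    rw [tsum_congr hterm, tsum_mul_left, IH.2]
  rw [h0, hsum1]
  have hx1 : x + (((a + 1 : ℝ)) : ℂ) = x + a + 1 := by push_cast; ring
  rw [hx1]
  -- now pure algebra with the functional equation
  rcases eq_or_ne (x + (a : ℂ)) 0 with hxa | hxa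
  · have ha' : (a : ℂ) = -x := by linear_combination hxa
    have h1 : x + (a : ℂ) + 1 = 1 := by linear_combination hxa
    rw [h1, hxa, Complex.Gamma_one, Complex.Gamma_zero]
    rw [ha']
    field_simp
    simp
  · have hrel : Complex.Gamma (x + a + 1) = (x + a) * Complex.Gamma (x + a) := by
      rw [show x + (a : ℂ) + 1 = (x + (a : ℂ)) + 1 by ring, Complex.Gamma_add_one _ hxa]
    rcases eq_or_ne (Complex.Gamma (x + (a : ℂ))) 0 with hΓ | hΓ
    · rw [hrel, hΓ]
      simp
    · rw [hrel]
      field_simp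

lemma main_expansion (a : ℝ) (x : ℂ) (hx : 0 < x.re) :
    Summable (fun j : ℕ =>
      (ascPochhammer ℂ j).eval (a : ℂ) / Complex.Gamma (x + a + 1 + j))
    ∧ ∑' j : ℕ, (ascPochhammer ℂ j).eval (a : ℂ) / Complex.Gamma (x + a + 1 + j)
      = 1 / (x * Complex.Gamma (x + a)) := by
  obtain ⟨n, hn⟩ := exists_nat_gt (-a)
  have hpos : 0 < a + n := by linarith
  clear hn
  induction n generalizing a with
  | zero => exact core a (by simpa using hpos) x hx
  | succ m ih =>
    apply descend a x hx
    apply ih (a + 1)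
    push_cast at hpos ⊢
    linarith

end InverseFactorialExpansionAux

open InverseFactorialExpansionAux in
/-- Let `α > 0`, `β`, `γ` be real numbers with `γ > 0`. For every complex `s` with
`Re(s) > −γ/α` one has the convergent expansion
`1/((αs+γ) · Γ(αs+α+β)) = Σ_{j=0}^∞ (α+β−γ)_j / Γ(αs + 1 + α + β + j)`,
where `(a)_j` is the Pochhammer symbol. -/
theorem inverse_factorial_expansion (α β γ : ℝ) (hα : 0 < α) (hγ : 0 < γ)
    (s : ℂ) (hs : -γ / α < s.re) :
    Summable (fun j : ℕ =>
      (ascPochhammer ℂ j).eval ((α : ℂ) + β - γ) / Complex.Gamma ((α : ℂ) * s + 1 + α + β + j))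
    ∧ (1 : ℂ) / (((α : ℂ) * s + γ) * Complex.Gamma ((α : ℂ) * s + α + β))
      = ∑' j : ℕ,
          (ascPochhammer ℂ j).eval ((α : ℂ) + β - γ)
            / Complex.Gamma ((α : ℂ) * s + 1 + α + β + j) := by
  set a : ℝ := α + β - γ with ha
  set x : ℂ := (α : ℂ) * s + γ with hxdef
  have hx : 0 < x.re := by
    have hre : x.re = α * s.re + γ := by
      rw [hxdef]
      simp [Complex.add_re, Complex.mul_re]
    have hαs : -γ < α * s.re := by
      rw [div_lt_iff₀ hα] at hs
      linarith [hs]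
    rw [hre]
    linarith
  have hca : ((a : ℝ) : ℂ) = (α : ℂ) + β - γ := by rw [ha]; push_cast; ring
  have harg : ∀ j : ℕ, x + (a : ℂ) + 1 + (j : ℂ) = (α : ℂ) * s + 1 + α + β + j := by
    intro j; rw [hca, hxdef]; push_cast; ring
  have harg2 : x + (a : ℂ) = (α : ℂ) * s + α + β := by rw [hca, hxdef]; push_cast; ring
  obtain ⟨h1, h2⟩ := main_expansion a x hx
  have hfun : (fun j : ℕ => (ascPochhammer ℂ j).eval ((α : ℂ) + β - γ)
        / Complex.Gamma ((α : ℂ) * s + 1 + α + β + j))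
      = fun j : ℕ => (ascPochhammer ℂ j).eval (a : ℂ)
        / Complex.Gamma (x + a + 1 + j) := by
    funext j
    rw [← harg j, ← hca]
  rw [hfun]
  refine ⟨h1, ?_⟩
  rw [h2, ← harg2]
end

section
/- For every real β > 0, Cin_{1,β}(x) / log x tends to 1/Γ(β) as x → +∞; that is, Cin_{1,β}(x) grows logarithmically like (log x)/Γ(β). -/
open Real Filter MeasureTheory intervalIntegral Nat Topology

lemma beta_real {β : ℝ} (hβ : 0 < β) (n : ℕ) :
    ∫ u in (0:ℝ)..1, u ^ (2*n+1) * (1 - u) ^ (β - 1) =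
      Real.Gamma (2*n+2) * Real.Gamma β / Real.Gamma (2*n+2+β) := by
  have hre : (0:ℝ) < ((2*(n:ℂ)+2)).re := by simp; positivity
  have hβre : (0:ℝ) < ((β:ℂ)).re := by simpa using hβ
  have key := Complex.Gamma_mul_Gamma_eq_betaIntegral hre hβre
  have hbeta : Complex.betaIntegral (2*(n:ℂ)+2) β =
      ((∫ u in (0:ℝ)..1, u ^ (2*n+1) * (1 - u) ^ (β - 1) : ℝ) : ℂ) := by
    rw [Complex.betaIntegral, ← intervalIntegral.integral_ofReal]
    refine intervalIntegral.integral_congr fun x hx => ?_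
    rw [Set.uIcc_of_le (by norm_num)] at hx
    obtain ⟨hx0, hx1⟩ := hx
    have h1 : (2*(n:ℂ)+2) - 1 = ((2*n+1 : ℕ) : ℂ) := by push_cast; ring
    have h2 : ((β:ℂ)) - 1 = ((β - 1 : ℝ) : ℂ) := by push_cast; ring
    rw [h1, h2, Complex.cpow_natCast]
    rw [show ((1:ℂ) - x) = (((1 - x : ℝ)):ℂ) by push_cast; ring]
    rw [← Complex.ofReal_cpow (by linarith)]
    push_cast
    ring
  rw [hbeta] at key
  have hΓ1 : Complex.Gamma (2*(n:ℂ)+2) = ((Real.Gamma (2*n+2) : ℝ) : ℂ) := by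
    rw [show (2*(n:ℂ)+2) = ((2*(n:ℝ)+2 : ℝ) : ℂ) by push_cast; ring, Complex.Gamma_ofReal]
  have hΓ2 : Complex.Gamma ((β:ℂ)) = ((Real.Gamma β : ℝ) : ℂ) := Complex.Gamma_ofReal β
  have hΓ3 : Complex.Gamma (2*(n:ℂ)+2+β) = ((Real.Gamma (2*n+2+β) : ℝ) : ℂ) := by
    rw [show (2*(n:ℂ)+2+β) = ((2*(n:ℝ)+2+β : ℝ) : ℂ) by push_cast; ring, Complex.Gamma_ofReal]
  rw [hΓ1, hΓ2, hΓ3] at key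
  have hpos : 0 < Real.Gamma (2*n+2+β) := Real.Gamma_pos_of_pos (by positivity)
  have key2 : Real.Gamma (2*n+2) * Real.Gamma β =
      Real.Gamma (2*n+2+β) * ∫ u in (0:ℝ)..1, u ^ (2*n+1) * (1 - u) ^ (β - 1) := by
    exact_mod_cast key
  push_cast at key2 ⊢
  rw [eq_div_iff hpos.ne']
  linear_combination -key2

lemma hasSum_one_sub_cos (y : ℝ) :
    HasSum (fun n : ℕ => (-1:ℝ)^n * y^(2*n+2) / ((2*n+2)! : ℝ)) (1 - Real.cos y) := by
  have h := Real.hasSum_cos y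
  have h2 := ((hasSum_nat_add_iff'
      (f := fun n : ℕ => (-1:ℝ)^n * y^(2*n)/((2*n)! : ℝ)) 1).2 h).neg
  have e : (fun n : ℕ => (-1:ℝ)^n * y^(2*n+2) / ((2*n+2)! : ℝ))
      = fun n : ℕ => -((-1:ℝ)^(n+1) * y^(2*(n+1))/((2*(n+1))! : ℝ)) := by
    funext n
    have h3 : 2*(n+1) = 2*n+2 := by ring
    rw [h3]; ring
  rw [e]; convert h2 using 1; rfl; simp

lemma summable_aux (x : ℝ) : Summable (fun n : ℕ => x^(2*n+2) / ((2*n+2)! : ℝ)) :=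
  (Real.summable_pow_div_factorial x).comp_injective (fun a b h => by omega)

lemma rpow_integrable {β : ℝ} (hβ : 0 < β) :
    IntervalIntegrable (fun u : ℝ => (1 - u) ^ (β - 1)) volume 0 1 := by
  have h := (intervalIntegrable_rpow' (a := 0) (b := 1) (r := β - 1) (by linarith)).comp_sub_left 1
  simpa using h.symm

lemma cin_rep {β : ℝ} (hβ : 0 < β) {x : ℝ} (hx : 0 < x) :
    x ^ (2:ℕ) * ∑' n : ℕ, (-1:ℝ)^n * x ^ (2*n)
        / ((2*(n:ℝ) + 1 + 1) * Real.Gamma (2*(n:ℝ) + 2 + β)) =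
    (1 / Real.Gamma β) * ∫ u in (0:ℝ)..1, (1 - u) ^ (β - 1) * (1 - Real.cos (x*u)) / u := by
  set μ := MeasureTheory.volume.restrict (Set.Ioc (0:ℝ) 1) with hμ
  set F : ℕ → ℝ → ℝ :=
    fun n u => ((-1:ℝ)^n * x^(2*n+2)/((2*n+2)! : ℝ)) * (u^(2*n+1) * (1-u)^(β-1)) with hF
  have hΓβ : 0 < Real.Gamma β := Real.Gamma_pos_of_pos hβ
  have hbase : ∀ n : ℕ, IntervalIntegrable
      (fun u : ℝ => u^(2*n+1) * (1-u)^(β-1)) volume 0 1 := by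
    intro n
    exact (rpow_integrable hβ).continuousOn_mul (by fun_prop)
  have hFint : ∀ n : ℕ, Integrable (F n) μ := by
    intro n
    have h2 := ((hbase n).const_mul ((-1:ℝ)^n * x^(2*n+2)/((2*n+2)! : ℝ)))
    rw [intervalIntegrable_iff_integrableOn_Ioc_of_le (by norm_num)] at h2
    exact h2
  have hrpowInt : MeasureTheory.IntegrableOn (fun u : ℝ => (1-u)^(β-1)) (Set.Ioc 0 1) volume := by
    rw [← intervalIntegrable_iff_integrableOn_Ioc_of_le (by norm_num)]
    exact rpow_integrable hβ
  set C := ∫ u in Set.Ioc (0:ℝ) 1, (1-u)^(β-1) with hC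
  have hnorm : ∀ n : ℕ, (∫ u, ‖F n u‖ ∂μ) ≤ x^(2*n+2)/((2*n+2)! : ℝ) * C := by
    intro n
    rw [hμ, ← MeasureTheory.integral_const_mul]
    apply MeasureTheory.setIntegral_mono_on (hFint n).norm (hrpowInt.const_mul _)
      measurableSet_Ioc
    intro u hu
    have h1 : (0:ℝ) < u := hu.1
    have h2 : u ≤ 1 := hu.2
    have hrp : (0:ℝ) ≤ (1-u)^(β-1) := Real.rpow_nonneg (by linarith) _
    have hup : u^(2*n+1) ≤ 1 := pow_le_one₀ h1.le h2
    have e1 : ‖F n u‖ = x^(2*n+2)/((2*n+2)! : ℝ) * (u^(2*n+1) * (1-u)^(β-1)) := by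
      rw [hF, Real.norm_eq_abs, abs_mul, abs_mul, abs_div, abs_mul, abs_pow, abs_neg,
        abs_one, one_pow, one_mul, abs_of_nonneg (pow_nonneg hx.le (2*n+2)),
        abs_of_nonneg (pow_nonneg h1.le (2*n+1)), abs_of_nonneg hrp, Nat.abs_cast]
    rw [e1]
    calc x^(2*n+2)/((2*n+2)! : ℝ) * (u^(2*n+1) * (1-u)^(β-1))
        ≤ x^(2*n+2)/((2*n+2)! : ℝ) * (1-u)^(β-1) := by
          apply mul_le_mul_of_nonneg_left _ (by positivity)
          nlinarith [mul_le_mul_of_nonneg_right hup hrp]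
      _ = x^(2*n+2)/((2*n+2)! : ℝ) * (1-u)^(β-1) := rfl
  have hsum : Summable (fun n : ℕ => ∫ u, ‖F n u‖ ∂μ) := by
    apply Summable.of_nonneg_of_le
      (fun n => MeasureTheory.integral_nonneg fun u => norm_nonneg _) hnorm
    exact (summable_aux x).mul_right C
  have hswap := MeasureTheory.integral_tsum_of_summable_integral_norm hFint hsum
  have hpt : ∀ u ∈ Set.Ioc (0:ℝ) 1,
      (∑' n, F n u) = (1-u)^(β-1) * (1 - Real.cos (x*u)) / u := by
    intro u hu
    have hu0 : (0:ℝ) < u := hu.1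
    have hs := (hasSum_one_sub_cos (x*u)).mul_right ((1-u)^(β-1) / u)
    have e : (fun n => F n u)
        = fun n : ℕ => ((-1:ℝ)^n * (x*u)^(2*n+2)/((2*n+2)! : ℝ)) * ((1-u)^(β-1)/u) := by
      funext n
      have hfac : ((2*n+2)! : ℝ) ≠ 0 := by positivity
      rw [hF, mul_pow]
      field_simp
      ring
    rw [e, hs.tsum_eq]
    ring
  have hIoc : (∫ u, (∑' n, F n u) ∂μ)
      = ∫ u in (0:ℝ)..1, (1-u)^(β-1) * (1 - Real.cos (x*u)) / u := by
    rw [intervalIntegral.integral_of_le (by norm_num)]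
    exact MeasureTheory.setIntegral_congr_fun measurableSet_Ioc hpt
  have hterm : ∀ n : ℕ, x ^ (2:ℕ) * ((-1:ℝ)^n * x ^ (2*n)
        / ((2*(n:ℝ) + 1 + 1) * Real.Gamma (2*(n:ℝ) + 2 + β)))
      = (1 / Real.Gamma β) * ∫ u, F n u ∂μ := by
    intro n
    have hint : (∫ u, F n u ∂μ) = ((-1:ℝ)^n * x^(2*n+2)/((2*n+2)! : ℝ))
        * ∫ u in (0:ℝ)..1, u^(2*n+1) * (1-u)^(β-1) := by
      rw [intervalIntegral.integral_of_le (by norm_num), hμ, ← MeasureTheory.integral_const_mul]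
    rw [hint, beta_real hβ n]
    have hΓn : Real.Gamma (2*(n:ℝ)+2) = ((2*n+1)! : ℝ) := by
      rw [show (2*(n:ℝ)+2) = ((2*n+1 : ℕ):ℝ) + 1 by push_cast; ring,
        Real.Gamma_nat_eq_factorial]
    have hfac : ((2*n+2)! : ℝ) = (2*(n:ℝ)+2) * ((2*n+1)! : ℝ) := by
      rw [show 2*n+2 = (2*n+1)+1 by ring, Nat.factorial_succ]
      push_cast; ring
    have hΓp : 0 < Real.Gamma (2*(n:ℝ)+2+β) := Real.Gamma_pos_of_pos (by positivity)
    have hfp : (0:ℝ) < ((2*n+1)! : ℝ) := by positivity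
    rw [hΓn, hfac, pow_add]
    field_simp
    ring
  calc x ^ (2:ℕ) * ∑' n : ℕ, (-1:ℝ)^n * x ^ (2*n)
        / ((2*(n:ℝ) + 1 + 1) * Real.Gamma (2*(n:ℝ) + 2 + β))
      = ∑' n : ℕ, x ^ (2:ℕ) * ((-1:ℝ)^n * x ^ (2*n)
        / ((2*(n:ℝ) + 1 + 1) * Real.Gamma (2*(n:ℝ) + 2 + β))) := by rw [tsum_mul_left]
    _ = ∑' n : ℕ, (1 / Real.Gamma β) * ∫ u, F n u ∂μ := by
        exact tsum_congr hterm
    _ = (1 / Real.Gamma β) * ∑' n : ℕ, ∫ u, F n u ∂μ := by rw [tsum_mul_left]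
    _ = (1 / Real.Gamma β) * ∫ u, (∑' n, F n u) ∂μ := by rw [hswap]
    _ = (1 / Real.Gamma β) * ∫ u in (0:ℝ)..1, (1-u)^(β-1) * (1 - Real.cos (x*u)) / u := by
        rw [hIoc]

lemma cos_div_bound {x : ℝ} (hx : 1 ≤ x) : |∫ v in (1:ℝ)..x, Real.cos v / v| ≤ 3 := by
  have hne : ∀ v ∈ Set.uIcc (1:ℝ) x, v ≠ 0 := by
    intro v hv
    rw [Set.uIcc_of_le hx] at hv
    have := hv.1; positivity
  have h1 : ∀ v ∈ Set.uIcc (1:ℝ) x, HasDerivAt (fun t : ℝ => t⁻¹) (-((v:ℝ)^2)⁻¹) v := by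
    intro v hv
    simpa using hasDerivAt_inv (hne v hv)
  have h2 : ∀ v ∈ Set.uIcc (1:ℝ) x, HasDerivAt Real.sin (Real.cos v) v :=
    fun v _ => Real.hasDerivAt_sin v
  have hu' : IntervalIntegrable (fun v : ℝ => -((v:ℝ)^2)⁻¹) volume 1 x := by
    apply ContinuousOn.intervalIntegrable
    exact ((continuousOn_id.pow 2).inv₀ fun v hv => pow_ne_zero 2 (hne v hv)).neg
  have hv' : IntervalIntegrable Real.cos volume 1 x :=
    Real.continuous_cos.intervalIntegrable _ _
  have key := intervalIntegral.integral_mul_deriv_eq_deriv_mul h1 h2 hu' hv'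
  rw [show (∫ v in (1:ℝ)..x, Real.cos v / v) = ∫ v in (1:ℝ)..x, v⁻¹ * Real.cos v from
    intervalIntegral.integral_congr (fun v _ => by rw [div_eq_inv_mul])]
  rw [key]
  have hI : |∫ v in (1:ℝ)..x, -((v:ℝ)^2)⁻¹ * Real.sin v| ≤ 1 := by
    have hb : IntervalIntegrable (fun v : ℝ => ((v:ℝ)^2)⁻¹) volume 1 x := by
      apply ContinuousOn.intervalIntegrable
      exact (continuousOn_id.pow 2).inv₀ fun v hv => pow_ne_zero 2 (hne v hv)
    have hle := intervalIntegral.norm_integral_le_abs_of_norm_le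
      (f := fun v : ℝ => -((v:ℝ)^2)⁻¹ * Real.sin v)
      (g := fun v : ℝ => ((v:ℝ)^2)⁻¹) (μ := volume) (a := 1) (b := x)
      (Filter.Eventually.of_forall (fun t => by
        rw [Real.norm_eq_abs, abs_mul, abs_neg, abs_inv, abs_pow, sq_abs]
        calc ((t:ℝ)^2)⁻¹ * |Real.sin t| ≤ ((t:ℝ)^2)⁻¹ * 1 :=
              mul_le_mul_of_nonneg_left (Real.abs_sin_le_one t) (by positivity)
          _ = ((t:ℝ)^2)⁻¹ := mul_one _)) hb
    have hval : (∫ v in (1:ℝ)..x, ((v:ℝ)^2)⁻¹) = 1 - x⁻¹ := by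
      rw [show (fun v : ℝ => ((v:ℝ)^2)⁻¹) = fun v : ℝ => v ^ (-2:ℤ) from funext fun v => by
        rw [zpow_neg]
        norm_cast]
      rw [integral_zpow (Or.inr ⟨by norm_num, fun h => hne 0 h rfl⟩)]
      norm_num
      ring
    rw [Real.norm_eq_abs] at hle
    have hxi : 0 < x⁻¹ := by positivity
    have hxi1 : x⁻¹ ≤ 1 := by
      rw [inv_le_one_iff₀]; right; exact hx
    have : |(1:ℝ) - x⁻¹| ≤ 1 := by rw [abs_le]; constructor <;> linarith
    calc |∫ v in (1:ℝ)..x, -((v:ℝ)^2)⁻¹ * Real.sin v| ≤ |(1:ℝ) - x⁻¹| := hval ▸ hle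
      _ ≤ 1 := this
  have e1 : |x⁻¹ * Real.sin x| ≤ 1 := by
    rw [abs_mul, abs_inv, abs_of_pos (by linarith : (0:ℝ) < x)]
    calc x⁻¹ * |Real.sin x| ≤ 1 * 1 := by
          apply mul_le_mul _ (Real.abs_sin_le_one x) (abs_nonneg _) one_pos.le
          rw [inv_le_one_iff₀]; right; exact hx
      _ = 1 := mul_one 1
  have e2 : |(1:ℝ)⁻¹ * Real.sin 1| ≤ 1 := by
    rw [inv_one, one_mul]; exact Real.abs_sin_le_one 1
  obtain ⟨a1, a2⟩ := abs_le.1 e1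
  obtain ⟨b1, b2⟩ := abs_le.1 e2
  obtain ⟨c1, c2⟩ := abs_le.1 hI
  rw [abs_le]; constructor <;> linarith

lemma f_integrable {t : ℝ} (ht : 0 ≤ t) :
    IntervalIntegrable (fun v : ℝ => (1 - Real.cos v) / v) volume 0 t := by
  rw [intervalIntegrable_iff_integrableOn_Ioc_of_le ht]
  apply MeasureTheory.Integrable.mono' (g := fun _ : ℝ => t/2)
    (MeasureTheory.integrable_const _)
  · apply Measurable.aestronglyMeasurable
    fun_prop
  · rw [MeasureTheory.ae_restrict_iff' measurableSet_Ioc]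
    apply Filter.Eventually.of_forall
    intro v hv
    have hv0 : 0 < v := hv.1
    have hcos := Real.one_sub_sq_div_two_le_cos (x := v)
    have h1 : 0 ≤ 1 - Real.cos v := by nlinarith [Real.cos_le_one v]
    rw [Real.norm_eq_abs, abs_div, abs_of_nonneg h1, abs_of_pos hv0, div_le_iff₀ hv0]
    nlinarith [hv.2]

lemma A_eq {x : ℝ} (hx : 0 < x) :
    (∫ u in (0:ℝ)..1, (1 - Real.cos (x*u)) / u)
      = ∫ v in (0:ℝ)..x, (1 - Real.cos v) / v := by
  have e : ∀ u : ℝ, (1 - Real.cos (x*u)) / u = x * ((1 - Real.cos (x*u)) / (x*u)) := by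
    intro u
    rcases eq_or_ne u 0 with h | h
    · simp [h]
    · field_simp
  rw [intervalIntegral.integral_congr (fun u _ => e u),
    intervalIntegral.integral_const_mul,
    intervalIntegral.integral_comp_mul_left (fun v => (1 - Real.cos v)/v) hx.ne']
  rw [mul_zero, mul_one, smul_eq_mul, ← mul_assoc, mul_inv_cancel₀ hx.ne', one_mul]

lemma A_bound {x : ℝ} (hx : 1 ≤ x) :
    |(∫ u in (0:ℝ)..1, (1 - Real.cos (x*u)) / u) - Real.log x| ≤ 4 := by
  have hx0 : (0:ℝ) < x := by linarith
  rw [A_eq hx0]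
  have hsplit : (∫ v in (0:ℝ)..x, (1 - Real.cos v) / v)
      = (∫ v in (0:ℝ)..1, (1 - Real.cos v) / v) + ∫ v in (1:ℝ)..x, (1 - Real.cos v) / v := by
    rw [intervalIntegral.integral_add_adjacent_intervals (f_integrable zero_le_one)
      ((f_integrable hx0.le).mono_set (by
        rw [Set.uIcc_of_le hx, Set.uIcc_of_le hx0.le]
        exact Set.Icc_subset_Icc zero_le_one le_rfl))]
  have hpos : ∀ v ∈ Set.uIcc (1:ℝ) x, v ≠ 0 := by
    intro v hv; rw [Set.uIcc_of_le hx] at hv; have := hv.1; positivity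
  have hco : ContinuousOn (fun v : ℝ => Real.cos v / v) (Set.uIcc 1 x) :=
    Real.continuous_cos.continuousOn.div continuousOn_id hpos
  have hone : ContinuousOn (fun v : ℝ => 1 / v) (Set.uIcc 1 x) :=
    continuousOn_const.div continuousOn_id hpos
  have h1x : (∫ v in (1:ℝ)..x, (1 - Real.cos v)/v)
      = Real.log x - ∫ v in (1:ℝ)..x, Real.cos v / v := by
    simp only [sub_div]
    rw [intervalIntegral.integral_sub hone.intervalIntegrable hco.intervalIntegrable,
      integral_one_div (fun h => hpos 0 h rfl), div_one]
  have h01 : |∫ v in (0:ℝ)..1, (1 - Real.cos v)/v| ≤ 1 := by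
    have hb := intervalIntegral.norm_integral_le_of_norm_le_const
      (f := fun v : ℝ => (1 - Real.cos v)/v) (a := 0) (b := 1) (C := 1/2) ?_
    · rw [Real.norm_eq_abs] at hb
      calc |∫ v in (0:ℝ)..1, (1 - Real.cos v)/v| ≤ 1/2 * |1 - 0| := hb
        _ ≤ 1 := by norm_num
    · intro v hv
      rw [Set.uIoc_of_le zero_le_one] at hv
      have hv0 : 0 < v := hv.1
      have h1 : 0 ≤ 1 - Real.cos v := by nlinarith [Real.cos_le_one v]
      have hcos := Real.one_sub_sq_div_two_le_cos (x := v)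
      rw [Real.norm_eq_abs, abs_div, abs_of_nonneg h1, abs_of_pos hv0, div_le_iff₀ hv0]
      nlinarith [hv.2]
  have h3 := cos_div_bound hx
  obtain ⟨a1, a2⟩ := abs_le.1 h01
  obtain ⟨b1, b2⟩ := abs_le.1 h3
  rw [hsplit, h1x, abs_le]
  constructor <;> [linarith; linarith]

lemma mvt_bound {β : ℝ} (hβ : 0 < β) {u : ℝ} (hu : u ∈ Set.Icc (0:ℝ) (1/2)) :
    |(1-u)^(β-1) - 1| ≤ (|β-1| * (1 + (2:ℝ)^(2-β))) * u := by
  set K : ℝ := |β-1| * (1 + (2:ℝ)^(2-β)) with hK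
  have hderiv : ∀ t ∈ Set.Icc (0:ℝ) (1/2),
      HasDerivWithinAt (fun t : ℝ => (1-t)^(β-1)) (-((β-1) * (1-t)^(β-2)))
        (Set.Icc (0:ℝ) (1/2)) t := by
    intro t ht
    have h1t : (0:ℝ) < 1 - t := by have := ht.2; linarith
    have h := (Real.hasDerivAt_rpow_const (x := 1-t) (p := β-1)
      (Or.inl h1t.ne')).comp t ((hasDerivAt_id t).const_sub 1)
    have h2 : HasDerivAt (fun t : ℝ => (1-t)^(β-1)) ((β-1) * (1-t)^(β-1-1) * (-1)) t := by
      simpa [Function.comp_def] using h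
    have h3 : (β-1) * (1-t)^(β-1-1) * (-1) = -((β-1) * (1-t)^(β-2)) := by
      rw [show β-1-1 = β-2 by ring]; ring
    rw [h3] at h2
    exact h2.hasDerivWithinAt
  have hbound : ∀ t ∈ Set.Icc (0:ℝ) (1/2), ‖-((β-1) * (1-t)^(β-2))‖ ≤ K := by
    intro t ht
    have h1t : (1:ℝ)/2 ≤ 1 - t := by have := ht.2; linarith
    have h1t' : 1 - t ≤ 1 := by have := ht.1; linarith
    have h1t0 : (0:ℝ) < 1 - t := by linarith
    have key : (1-t)^(β-2) ≤ 1 + (2:ℝ)^(2-β) := by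
      rcases le_or_gt 2 β with h | h
      · have h1 := Real.rpow_le_one h1t0.le h1t' (by linarith : (0:ℝ) ≤ β - 2)
        have h2 : (0:ℝ) ≤ (2:ℝ)^(2-β) := Real.rpow_nonneg (by norm_num) _
        linarith
      · have h2 : (1-t)^(β-2) ≤ ((1:ℝ)/2)^(β-2) :=
          Real.rpow_le_rpow_of_nonpos (by norm_num) h1t (by linarith)
        have h3 : ((1:ℝ)/2)^(β-2) = (2:ℝ)^(2-β) := by
          rw [one_div, Real.inv_rpow (by norm_num : (0:ℝ) ≤ 2),
            ← Real.rpow_neg (by norm_num : (0:ℝ) ≤ 2)]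
          norm_num
        have h4 : (0:ℝ) < 1 := one_pos
        linarith [h3 ▸ h2]
    rw [norm_neg, Real.norm_eq_abs, abs_mul,
      abs_of_nonneg (Real.rpow_nonneg h1t0.le _)]
    have habs : (0:ℝ) ≤ |β-1| := abs_nonneg _
    calc |β-1| * (1-t)^(β-2) ≤ |β-1| * (1 + (2:ℝ)^(2-β)) :=
          mul_le_mul_of_nonneg_left key habs
      _ = K := rfl
  have h0 : (0:ℝ) ∈ Set.Icc (0:ℝ) (1/2) := by constructor <;> norm_num
  have := (convex_Icc (0:ℝ) (1/2)).norm_image_sub_le_of_norm_hasDerivWithin_le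
    hderiv hbound h0 hu
  simpa [Real.one_rpow, abs_of_nonneg hu.1] using this

lemma diff_bound {β : ℝ} (hβ : 0 < β) (x : ℝ) {u : ℝ} (hu : u ∈ Set.Ioc (0:ℝ) 1) :
    |((1-u)^(β-1) * (1 - Real.cos (x*u)) / u) - (1 - Real.cos (x*u)) / u|
      ≤ (2*(|β-1| * (1 + (2:ℝ)^(2-β))) + 4) + 4*(1-u)^(β-1) := by
  set K : ℝ := |β-1| * (1 + (2:ℝ)^(2-β)) with hK
  have hK0 : 0 ≤ K := by
    apply mul_nonneg (abs_nonneg _)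
    have := Real.rpow_nonneg (by norm_num : (0:ℝ) ≤ 2) (2-β)
    linarith
  have hu0 := hu.1
  have hu1 := hu.2
  have hrp : (0:ℝ) ≤ (1-u)^(β-1) := Real.rpow_nonneg (by linarith) _
  have hcos : |1 - Real.cos (x*u)| ≤ 2 := by
    have h1 := Real.cos_le_one (x*u)
    have h2 := Real.neg_one_le_cos (x*u)
    rw [abs_le]; constructor <;> linarith
  have heq : ((1-u)^(β-1) * (1 - Real.cos (x*u)) / u) - (1 - Real.cos (x*u)) / u
      = ((1-u)^(β-1) - 1) * ((1 - Real.cos (x*u)) / u) := by ring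
  rw [heq, abs_mul, abs_div, abs_of_pos hu0]
  rcases le_or_gt u (1/2) with h | h
  · have hm := mvt_bound hβ ⟨hu0.le, h⟩
    calc |(1-u)^(β-1) - 1| * (|1 - Real.cos (x*u)| / u)
        ≤ (K * u) * (2 / u) := by
          apply mul_le_mul hm _ (by positivity) (by positivity)
          exact div_le_div_of_nonneg_right hcos hu0.le
      _ = 2*K := by field_simp
      _ ≤ (2*K + 4) + 4*(1-u)^(β-1) := by nlinarith
  · have habs : |(1-u)^(β-1) - 1| ≤ (1-u)^(β-1) + 1 := by
      calc |(1-u)^(β-1) - 1| ≤ |(1-u)^(β-1)| + |(1:ℝ)| := abs_sub _ _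
        _ = (1-u)^(β-1) + 1 := by rw [abs_of_nonneg hrp, abs_one]
    have hdiv : |1 - Real.cos (x*u)| / u ≤ 4 := by
      rw [div_le_iff₀ hu0]
      nlinarith
    calc |(1-u)^(β-1) - 1| * (|1 - Real.cos (x*u)| / u)
        ≤ ((1-u)^(β-1) + 1) * 4 := by
          apply mul_le_mul habs hdiv (by positivity) (by positivity)
      _ ≤ (2*K + 4) + 4*(1-u)^(β-1) := by nlinarith

lemma A_integrable {x : ℝ} (hx : 0 < x) :
    IntervalIntegrable (fun u : ℝ => (1 - Real.cos (x*u)) / u) volume 0 1 := by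
  rw [intervalIntegrable_iff_integrableOn_Ioc_of_le zero_le_one]
  apply MeasureTheory.Integrable.mono' (g := fun _ : ℝ => x^2/2)
    (MeasureTheory.integrable_const _)
  · apply Measurable.aestronglyMeasurable; fun_prop
  · rw [MeasureTheory.ae_restrict_iff' measurableSet_Ioc]
    apply Filter.Eventually.of_forall
    intro u hu
    have hu0 : 0 < u := hu.1
    have hcos := Real.one_sub_sq_div_two_le_cos (x := x*u)
    have h1 : 0 ≤ 1 - Real.cos (x*u) := by nlinarith [Real.cos_le_one (x*u)]
    rw [Real.norm_eq_abs, abs_div, abs_of_nonneg h1, abs_of_pos hu0, div_le_iff₀ hu0]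
    nlinarith [hu.2, sq_nonneg (x*u), sq_nonneg u, mul_pos hx hu0]

lemma G_integrable {β : ℝ} (hβ : 0 < β) {x : ℝ} (hx : 0 < x) :
    IntervalIntegrable (fun u : ℝ => (1-u)^(β-1) * (1 - Real.cos (x*u)) / u) volume 0 1 := by
  rw [intervalIntegrable_iff_integrableOn_Ioc_of_le zero_le_one]
  apply MeasureTheory.Integrable.mono' (g := fun u : ℝ => (1-u)^(β-1) * (x^2/2))
  · have := (rpow_integrable hβ).mul_const (x^2/2)
    rw [intervalIntegrable_iff_integrableOn_Ioc_of_le zero_le_one] at this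
    exact this
  · apply Measurable.aestronglyMeasurable
    apply Measurable.div _ measurable_id
    apply Measurable.mul _ (by fun_prop)
    exact (measurable_const.sub measurable_id).pow measurable_const
  · rw [MeasureTheory.ae_restrict_iff' measurableSet_Ioc]
    apply Filter.Eventually.of_forall
    intro u hu
    have hu0 : 0 < u := hu.1
    have hrp : (0:ℝ) ≤ (1-u)^(β-1) := Real.rpow_nonneg (by linarith [hu.2]) _
    have hcos := Real.one_sub_sq_div_two_le_cos (x := x*u)
    have h1 : 0 ≤ 1 - Real.cos (x*u) := by nlinarith [Real.cos_le_one (x*u)]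
    have hb : (1 - Real.cos (x*u))/u ≤ x^2/2 := by
      rw [div_le_iff₀ hu0]
      nlinarith [hu.2, mul_pos hx hu0]
    have he : (1-u)^(β-1) * (1 - Real.cos (x*u)) / u
        = (1-u)^(β-1) * ((1 - Real.cos (x*u)) / u) := by ring
    rw [Real.norm_eq_abs, he, abs_mul, abs_of_nonneg hrp, abs_div,
      abs_of_nonneg h1, abs_of_pos hu0]
    exact mul_le_mul_of_nonneg_left hb hrp

lemma G_sub_A_bound {β : ℝ} (hβ : 0 < β) {x : ℝ} (hx : 1 ≤ x) :
    |(∫ u in (0:ℝ)..1, (1-u)^(β-1) * (1 - Real.cos (x*u)) / u)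
      - ∫ u in (0:ℝ)..1, (1 - Real.cos (x*u)) / u|
    ≤ |∫ u in (0:ℝ)..1, ((2*(|β-1| * (1 + (2:ℝ)^(2-β))) + 4) + 4*(1-u)^(β-1))| := by
  have hx0 : (0:ℝ) < x := by linarith
  rw [← intervalIntegral.integral_sub (G_integrable hβ hx0) (A_integrable hx0)]
  have hD : IntervalIntegrable
      (fun u : ℝ => (2*(|β-1| * (1 + (2:ℝ)^(2-β))) + 4) + 4*(1-u)^(β-1)) volume 0 1 :=
    (_root_.intervalIntegrable_const).add ((rpow_integrable hβ).const_mul 4)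
  have h := intervalIntegral.norm_integral_le_abs_of_norm_le
    (f := fun u : ℝ => ((1-u)^(β-1) * (1 - Real.cos (x*u)) / u) - (1 - Real.cos (x*u)) / u)
    (μ := volume) (a := 0) (b := 1)
    (g := fun u : ℝ => (2*(|β-1| * (1 + (2:ℝ)^(2-β))) + 4) + 4*(1-u)^(β-1)) ?_ hD
  · exact h
  · rw [MeasureTheory.ae_restrict_iff' measurableSet_uIoc]
    apply Filter.Eventually.of_forall
    intro u hu
    rw [Set.uIoc_of_le zero_le_one] at hu
    exact diff_bound hβ x hu

/-- For every real `β > 0`, `Cin_{1,β}(x) / log x` tends to `1/Γ(β)` as `x → +∞`;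
that is, `Cin_{1,β}(x)` grows logarithmically like `(log x)/Γ(β)`. -/
theorem cin_one_tendsto (β : ℝ) (hβ : 0 < β) :
    Tendsto (fun x : ℝ =>
        (x ^ ((1 : ℝ) + 1) * ∑' n : ℕ, (-1 : ℝ) ^ n * x ^ (2 * (n : ℝ))
          / ((2 * (n : ℝ) + 1 + 1) * Real.Gamma (2 * (n : ℝ) + 2 + β))) / Real.log x)
      atTop (nhds (1 / Real.Gamma β)) := by
  have hΓβ : 0 < Real.Gamma β := Real.Gamma_pos_of_pos hβ
  set M : ℝ := |∫ u in (0:ℝ)..1, ((2*(|β-1| * (1 + (2:ℝ)^(2-β))) + 4) + 4*(1-u)^(β-1))| + 4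
    with hM
  set G : ℝ → ℝ := fun x => ∫ u in (0:ℝ)..1, (1-u)^(β-1) * (1 - Real.cos (x*u)) / u with hG
  have hRbound : ∀ x : ℝ, 1 ≤ x → |G x - Real.log x| ≤ M := by
    intro x hx
    have h1 := G_sub_A_bound hβ hx
    have h2 := A_bound hx
    have h3 := abs_add_le (G x - ∫ u in (0:ℝ)..1, (1 - Real.cos (x*u)) / u)
      ((∫ u in (0:ℝ)..1, (1 - Real.cos (x*u)) / u) - Real.log x)
    rw [hM]
    calc |G x - Real.log x| ≤ _ + _ := by rw [show G x - Real.log x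
            = (G x - ∫ u in (0:ℝ)..1, (1 - Real.cos (x*u)) / u)
              + ((∫ u in (0:ℝ)..1, (1 - Real.cos (x*u)) / u) - Real.log x) by ring]; exact h3
      _ ≤ _ := add_le_add h1 h2
  have hR0 : Tendsto (fun x => (G x - Real.log x) / Real.log x) atTop (𝓝 0) := by
    apply squeeze_zero_norm' ?_ ((tendsto_const_nhds (x := M)).div_atTop Real.tendsto_log_atTop)
    filter_upwards [eventually_ge_atTop (2:ℝ)] with x hx
    have hlx : 0 < Real.log x := Real.log_pos (by linarith)
    rw [norm_div, Real.norm_eq_abs, Real.norm_eq_abs, abs_of_pos hlx]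
    exact div_le_div_of_nonneg_right (hRbound x (by linarith)) hlx.le
  have hmain : Tendsto (fun x => (1/Real.Gamma β) * (1 + (G x - Real.log x)/Real.log x))
      atTop (𝓝 (1/Real.Gamma β)) := by
    have h1 : Tendsto (fun x => 1 + (G x - Real.log x)/Real.log x) atTop (𝓝 1) := by
      simpa using (tendsto_const_nhds (x := (1:ℝ))).add hR0
    simpa using h1.const_mul (1/Real.Gamma β)
  apply Tendsto.congr' ?_ hmain
  filter_upwards [eventually_ge_atTop (2:ℝ)] with x hx
  have hx0 : (0:ℝ) < x := by linarith
  have hlx : 0 < Real.log x := Real.log_pos (by linarith)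
  have hrw1 : x ^ ((1:ℝ)+1) = x ^ (2:ℕ) := by
    rw [show ((1:ℝ)+1) = ((2:ℕ):ℝ) by norm_num, Real.rpow_natCast]
  have hrw2 : (∑' n : ℕ, (-1:ℝ)^n * x ^ (2*(n:ℝ))
        / ((2*(n:ℝ)+1+1)*Real.Gamma (2*(n:ℝ)+2+β)))
      = ∑' n : ℕ, (-1:ℝ)^n * x ^ (2*n)
        / ((2*(n:ℝ)+1+1)*Real.Gamma (2*(n:ℝ)+2+β)) := by
    apply tsum_congr; intro n
    rw [show (2*(n:ℝ)) = ((2*n : ℕ):ℝ) by push_cast; ring, Real.rpow_natCast]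
  rw [hrw1, hrw2, cin_rep hβ hx0]
  rw [hG]
  field_simp
  simp only [mul_comm _ x]
  ring
end
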